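/- arXiv:1510.02392 — 5 statements merged into one kernel-verified Lean document; each statement's English description precedes it below -/
import Mathlib

section
/- Let (X,d_X), (Y,d_Y) be separable metric spaces with Borel probability measures μ, ν, and let d be the Hamming average metric on X × Y. Then for all ε, δ > 0: pack_{ε,δ/2}(μ × ν, d) ≥ pack_{√ε,δ}(μ,d_X) · pack_{√ε,δ}(ν,d_Y), where pack_{ε,δ}(μ,d) := min{pack_δ(V,d) : V ⊆ X Borel with μ(V) > 1−ε}. -/
open MeasureTheory
open scoped ENNReal

/-- The δ-packing number of a subset `V` with respect to a distance function:
the maximal cardinality of a δ-separated finite subset of `V`. -/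
noncomputable def packNumSet {Z : Type*} (dZ : Z → Z → ℝ) (V : Set Z) (δ : ℝ) : ℕ∞ :=
  ⨆ F : {F : Finset Z // ↑F ⊆ V ∧ ∀ x ∈ F, ∀ y ∈ F, x ≠ y → δ ≤ dZ x y}, (F.1.card : ℕ∞)

/-- The `(ε,δ)`-packing number of a Borel probability measure: the infimum of
`pack_δ(V)` over Borel sets `V` of measure `> 1 - ε`. -/
noncomputable def packNumMeas {Z : Type*} [MeasurableSpace Z] (dZ : Z → Z → ℝ)
    (μ : Measure Z) (ε δ : ℝ) : ℕ∞ :=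
  ⨅ V : {V : Set Z // MeasurableSet V ∧ ENNReal.ofReal (1 - ε) < μ V},
    packNumSet dZ V.1 δ

private lemma top_le_of_forall_natCast_le {P : ℕ∞} (h : ∀ n : ℕ, (n : ℕ∞) ≤ P) :
    (⊤ : ℕ∞) ≤ P := by
  induction P using ENat.recTopCoe with
  | top => exact le_rfl
  | coe m =>
    have := h (m + 1)
    rw [Nat.cast_le] at this
    omega

private lemma exists_of_natCast_le_iSup {ι : Sort*} [Nonempty ι] (f : ι → ℕ) (a : ℕ)
    (h : (a : ℕ∞) ≤ ⨆ i, (f i : ℕ∞)) : ∃ i, a ≤ f i := by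
  by_contra hc
  push_neg at hc
  rcases Nat.eq_zero_or_pos a with rfl | ha
  · exact absurd (hc (Classical.arbitrary ι)) (by omega)
  · have hb : (⨆ i, (f i : ℕ∞)) ≤ ((a - 1 : ℕ) : ℕ∞) :=
      iSup_le fun i => by exact_mod_cast Nat.le_sub_one_of_lt (hc i)
    have := h.trans hb
    rw [Nat.cast_le] at this
    omega

private lemma mul_le_of_forall_natCast_le {p q P : ℕ∞}
    (h : ∀ a b : ℕ, (a : ℕ∞) ≤ p → (b : ℕ∞) ≤ q → (a : ℕ∞) * (b : ℕ∞) ≤ P) :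
    p * q ≤ P := by
  induction p using ENat.recTopCoe with
  | top =>
    induction q using ENat.recTopCoe with
    | top =>
      have hP : (⊤ : ℕ∞) ≤ P := top_le_of_forall_natCast_le fun n => by
        simpa using h n 1 le_top le_top
      exact le_top.trans hP
    | coe b =>
      rcases Nat.eq_zero_or_pos b with rfl | hb
      · simp
      · have hP : (⊤ : ℕ∞) ≤ P := top_le_of_forall_natCast_le fun n => by
          have := h n b le_top le_rfl
          exact le_trans (by exact_mod_cast Nat.le_mul_of_pos_right n hb) this
        exact le_trans le_top hP
  | coe a =>
    induction q using ENat.recTopCoe with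
    | top =>
      rcases Nat.eq_zero_or_pos a with rfl | ha
      · simp
      · have hP : (⊤ : ℕ∞) ≤ P := top_le_of_forall_natCast_le fun n => by
          have := h a n le_rfl le_top
          exact le_trans (by exact_mod_cast Nat.le_mul_of_pos_left n ha) this
        exact le_trans le_top hP
    | coe b => exact h a b le_rfl le_rfl

/-- **Packing numbers of product measures:**
`pack_{ε,δ/2}(μ × ν, d) ≥ pack_{√ε,δ}(μ,d_X) · pack_{√ε,δ}(ν,d_Y)`,
where `d` is the Hamming average metric on `X × Y`. -/
theorem packNumMeas_prod_ge {X Y : Type*} [MetricSpace X] [MetricSpace Y]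
    [TopologicalSpace.SeparableSpace X] [TopologicalSpace.SeparableSpace Y]
    [MeasurableSpace X] [BorelSpace X] [MeasurableSpace Y] [BorelSpace Y]
    (μ : Measure X) (ν : Measure Y) [IsProbabilityMeasure μ] [IsProbabilityMeasure ν]
    (ε δ : ℝ) (hε : 0 < ε) (hδ : 0 < δ) :
    packNumMeas dist μ (Real.sqrt ε) δ * packNumMeas dist ν (Real.sqrt ε) δ ≤
      packNumMeas (fun p q => (dist p.1 q.1 + dist p.2 q.2) / 2) (μ.prod ν) ε (δ / 2) := by
  classical
  unfold packNumMeas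
  refine le_iInf fun W => ?_
  obtain ⟨V, hVm, hVμ⟩ := W
  simp only
  set s := Real.sqrt ε with hs_def
  set t := ENNReal.ofReal (1 - s) with ht_def
  have hs0 : 0 ≤ s := Real.sqrt_nonneg ε
  set A := {x : X | t < ν (Prod.mk x ⁻¹' V)} with hA_def
  have hmeas_slice : Measurable fun x => ν (Prod.mk x ⁻¹' V) :=
    measurable_measure_prodMk_left hVm
  have hAm : MeasurableSet A := measurableSet_lt measurable_const hmeas_slice
  -- measure estimate : t < μ A
  have hμA : t < μ A := by
    by_contra hle
    push_neg at hle
    have h1 : ∀ x ∈ Aᶜ, (1 - t) ≤ ν (Prod.mk x ⁻¹' Vᶜ) := by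
      intro x hx
      have hx' : ν (Prod.mk x ⁻¹' V) ≤ t := not_lt.mp hx
      have : Prod.mk x ⁻¹' Vᶜ = (Prod.mk x ⁻¹' V)ᶜ := rfl
      rw [this, measure_compl (measurable_prodMk_left hVm) (measure_ne_top _ _),
        measure_univ]
      exact tsub_le_tsub_left hx' 1
    have h2 : (1 - t) * (1 - t) ≤ (μ.prod ν) Vᶜ := by
      have hAc : (1 : ℝ≥0∞) - t ≤ μ Aᶜ := by
        rw [measure_compl hAm (measure_ne_top _ _), measure_univ]
        exact tsub_le_tsub_left hle 1
      calc (1 - t) * (1 - t) ≤ (1 - t) * μ Aᶜ := mul_le_mul_right hAc _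
        _ = ∫⁻ _ in Aᶜ, (1 - t) ∂μ := (setLIntegral_const _ _).symm
        _ ≤ ∫⁻ x in Aᶜ, ν (Prod.mk x ⁻¹' Vᶜ) ∂μ :=
            setLIntegral_mono (measurable_measure_prodMk_left hVm.compl) h1
        _ ≤ ∫⁻ x, ν (Prod.mk x ⁻¹' Vᶜ) ∂μ := setLIntegral_le_lintegral _ _
        _ = (μ.prod ν) Vᶜ := (MeasureTheory.Measure.prod_apply hVm.compl).symm
    have h3 : (μ.prod ν) V ≤ 1 - (1 - t) * (1 - t) := by
      have h4 : (μ.prod ν) V = 1 - (μ.prod ν) Vᶜ := by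
        rw [measure_compl hVm (measure_ne_top _ _), measure_univ,
          ENNReal.sub_sub_cancel ENNReal.one_ne_top prob_le_one]
      rw [h4]
      exact tsub_le_tsub_left h2 1
    have h5 : (1 : ℝ≥0∞) - (1 - t) * (1 - t) ≤ ENNReal.ofReal (1 - ε) := by
      rcases le_or_gt s 1 with hs1 | hs1
      · have h1t : (1 : ℝ≥0∞) - t = ENNReal.ofReal s := by
          rw [ht_def, ← ENNReal.ofReal_one, ← ENNReal.ofReal_sub _ (by linarith)]
          norm_num
        rw [h1t, ← ENNReal.ofReal_mul hs0, Real.mul_self_sqrt hε.le,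
          ← ENNReal.ofReal_one, ← ENNReal.ofReal_sub _ hε.le]
      · have ht0 : t = 0 := ENNReal.ofReal_eq_zero.mpr (by linarith)
        simp [ht0]
    exact absurd (hVμ.trans_le (h3.trans h5)) (lt_irrefl _)
  -- combinatorial part
  refine mul_le_of_forall_natCast_le fun a b ha hb => ?_
  have ha' : (a : ℕ∞) ≤ packNumSet dist A δ :=
    ha.trans (iInf_le _ (⟨A, hAm, hμA⟩ :
      {V : Set X // MeasurableSet V ∧ ENNReal.ofReal (1 - s) < μ V}))
  rw [packNumSet] at ha'
  haveI : Nonempty {F : Finset X // ↑F ⊆ A ∧ ∀ x ∈ F, ∀ y ∈ F, x ≠ y → δ ≤ dist x y} :=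
    ⟨⟨∅, by simp⟩⟩
  obtain ⟨⟨F, hFA, hFsep⟩, haF⟩ := exists_of_natCast_le_iSup _ a ha'
  have hbx : ∀ x ∈ F, ∃ G : Finset Y, ↑G ⊆ Prod.mk x ⁻¹' V ∧
      (∀ y ∈ G, ∀ y' ∈ G, y ≠ y' → δ ≤ dist y y') ∧ b ≤ G.card := by
    intro x hx
    have hxA : x ∈ A := hFA hx
    have hb' : (b : ℕ∞) ≤ packNumSet dist (Prod.mk x ⁻¹' V) δ :=
      hb.trans (iInf_le _ (⟨Prod.mk x ⁻¹' V, measurable_prodMk_left hVm, hxA⟩ :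
        {W : Set Y // MeasurableSet W ∧ ENNReal.ofReal (1 - s) < ν W}))
    rw [packNumSet] at hb'
    haveI : Nonempty {G : Finset Y // ↑G ⊆ Prod.mk x ⁻¹' V ∧
        ∀ y ∈ G, ∀ y' ∈ G, y ≠ y' → δ ≤ dist y y'} := ⟨⟨∅, by simp⟩⟩
    obtain ⟨⟨G, h1, h2⟩, hbG⟩ := exists_of_natCast_le_iSup _ b hb'
    exact ⟨G, h1, h2, hbG⟩
  choose G hG1 hG2 hG3 using hbx
  set H : Finset (X × Y) := F.attach.biUnion
    (fun x => (G x.1 x.2).image (Prod.mk x.1)) with hH_def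
  have hmemH : ∀ p ∈ H, ∃ hx : p.1 ∈ F, p.2 ∈ G p.1 hx := by
    intro p hp
    rw [hH_def, Finset.mem_biUnion] at hp
    obtain ⟨x, -, hpx⟩ := hp
    rw [Finset.mem_image] at hpx
    obtain ⟨y, hy, rfl⟩ := hpx
    exact ⟨x.2, hy⟩
  have hHV : ↑H ⊆ V := by
    intro p hp
    obtain ⟨hx, hy⟩ := hmemH p (by exact_mod_cast hp)
    exact hG1 p.1 hx hy
  have hHsep : ∀ p ∈ H, ∀ q ∈ H, p ≠ q →
      δ / 2 ≤ (dist p.1 q.1 + dist p.2 q.2) / 2 := by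
    rintro ⟨px, py⟩ hp ⟨qx, qy⟩ hq hpq
    obtain ⟨hpx, hpy⟩ := hmemH _ hp
    obtain ⟨hqx, hqy⟩ := hmemH _ hq
    simp only at hpx hpy hqx hqy ⊢
    rcases eq_or_ne px qx with rfl | h1
    · have h2 : py ≠ qy := fun h2 => hpq (by rw [h2])
      have := hG2 px hpx py hpy qy hqy h2
      have h0 := dist_self px
      linarith
    · have := hFsep px hpx qx hqx h1
      have h0 : (0:ℝ) ≤ dist py qy := dist_nonneg
      linarith
  have hcard : a * b ≤ H.card := by
    rw [hH_def, Finset.card_biUnion]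
    · have : F.card * b ≤ ∑ x ∈ F.attach, ((G x.1 x.2).image (Prod.mk x.1)).card := by
        calc F.card * b = ∑ _x ∈ F.attach, b := by
              rw [Finset.sum_const, Finset.card_attach, smul_eq_mul]
          _ ≤ _ := by
              refine Finset.sum_le_sum fun x _ => ?_
              rw [Finset.card_image_of_injective _ (fun y y' h => (Prod.ext_iff.mp h).2)]
              exact hG3 x.1 x.2
      exact le_trans (Nat.mul_le_mul_right b haF) this
    · intro x _ y _ hxy
      simp only [Function.onFun, Finset.disjoint_left]
      intro p hp hq
      rw [Finset.mem_image] at hp hq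
      obtain ⟨u, -, rfl⟩ := hp
      obtain ⟨v, -, hv⟩ := hq
      exact hxy (Subtype.ext ((Prod.ext_iff.mp hv).1).symm)
  calc (a : ℕ∞) * b = ((a * b : ℕ) : ℕ∞) := by push_cast; ring
    _ ≤ (H.card : ℕ∞) := by exact_mod_cast hcard
    _ ≤ packNumSet (fun p q => (dist p.1 q.1 + dist p.2 q.2) / 2) V (δ / 2) := by
        rw [packNumSet]
        exact le_iSup (fun F : {F : Finset (X × Y) // ↑F ⊆ V ∧ ∀ p ∈ F, ∀ q ∈ F,
          p ≠ q → δ / 2 ≤ (dist p.1 q.1 + dist p.2 q.2) / 2} => (F.1.card : ℕ∞))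
          ⟨H, hHV, hHsep⟩
end

section
/- Let (X,d_X), (Y,d_Y) be separable metric spaces with Borel probability measures μ, ν, and d the Hamming average metric on X×Y. Then for all ε, δ > 0: cov_{ε,δ/4}(μ × ν, d) ≥ cov_{√ε,δ}(μ,d_X) · cov_{√ε,δ}(ν,d_Y). -/
open MeasureTheory

/-- The `(ε,δ)`-covering number of a Borel probability measure with respect to a
distance function `dZ`: the minimal cardinality of a finite set `F` whose open
δ-neighbourhood has measure `> 1 - ε`. -/
noncomputable def covNumMeas {Z : Type*} [MeasurableSpace Z] (dZ : Z → Z → ℝ)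
    (μ : Measure Z) (ε δ : ℝ) : ℕ∞ :=
  ⨅ F : {F : Finset Z // ENNReal.ofReal (1 - ε) < μ {z | ∃ x ∈ F, dZ x z < δ}},
    (F.1.card : ℕ∞)

/-- **Covering numbers of product measures:**
`cov_{ε,δ/4}(μ × ν, d) ≥ cov_{√ε,δ}(μ,d_X) · cov_{√ε,δ}(ν,d_Y)`,
where `d` is the Hamming average metric on `X × Y`. -/
theorem covNumMeas_prod_ge {X Y : Type*} [MetricSpace X] [MetricSpace Y]
    [TopologicalSpace.SeparableSpace X] [TopologicalSpace.SeparableSpace Y]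
    [MeasurableSpace X] [BorelSpace X] [MeasurableSpace Y] [BorelSpace Y]
    (μ : Measure X) (ν : Measure Y) [IsProbabilityMeasure μ] [IsProbabilityMeasure ν]
    (ε δ : ℝ) (hε : 0 < ε) (hδ : 0 < δ) :
    covNumMeas dist μ (Real.sqrt ε) δ * covNumMeas dist ν (Real.sqrt ε) δ ≤
      covNumMeas (fun p q => (dist p.1 q.1 + dist p.2 q.2) / 2) (μ.prod ν) ε (δ / 4) := by
  classical
  have : SecondCountableTopology X := UniformSpace.secondCountable_of_separable X
  have : SecondCountableTopology Y := UniformSpace.secondCountable_of_separable Y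
  refine le_iInf ?_
  rintro ⟨F, hF⟩
  -- the covered set in the product
  set U : Set (X × Y) :=
    {z | ∃ x ∈ F, (fun p q : X × Y => (dist p.1 q.1 + dist p.2 q.2) / 2) x z < δ / 4} with hUdef
  have hUopen : IsOpen U := by
    have hrw : U = ⋃ q ∈ F, {p : X × Y | (dist q.1 p.1 + dist q.2 p.2) / 2 < δ / 4} := by
      ext p; simp [hUdef]
    rw [hrw]
    refine isOpen_biUnion fun q _ => ?_
    have hc : Continuous fun p : X × Y => (dist q.1 p.1 + dist q.2 p.2) / 2 := by fun_prop
    exact isOpen_lt hc continuous_const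
  have hU : MeasurableSet U := hUopen.measurableSet
  set f : X → ENNReal := fun x => ν (Prod.mk x ⁻¹' U) with hfdef
  have hfmeas : Measurable f := measurable_measure_prodMk_left hU
  have hprod : (μ.prod ν) U = ∫⁻ x, f x ∂μ := Measure.prod_apply hU
  set a : ENNReal := ENNReal.ofReal (1 - Real.sqrt ε) with ha
  set G : Set X := {x | a < f x} with hGdef
  have hG : MeasurableSet G := hfmeas measurableSet_Ioi
  have hf1 : ∀ x, f x ≤ 1 := fun x => prob_le_one
  have hsqrt_pos : 0 < Real.sqrt ε := Real.sqrt_pos.2 hε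
  have hsq : Real.sqrt ε ^ 2 = ε := Real.sq_sqrt hε.le
  -- Markov step : a < μ G
  have hμG : a < μ G := by
    by_contra hcon
    push_neg at hcon
    have h1 : ∫⁻ x in G, f x ∂μ ≤ μ G := by
      calc ∫⁻ x in G, f x ∂μ ≤ ∫⁻ _x in G, 1 ∂μ :=
            setLIntegral_mono measurable_const fun x _ => hf1 x
        _ = μ G := by rw [setLIntegral_const, one_mul]
    have h2 : ∫⁻ x in Gᶜ, f x ∂μ ≤ a * μ Gᶜ := by
      calc ∫⁻ x in Gᶜ, f x ∂μ ≤ ∫⁻ _x in Gᶜ, a ∂μ :=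
            setLIntegral_mono measurable_const fun x hx => not_lt.1 hx
        _ = a * μ Gᶜ := setLIntegral_const _ _
    have hsplit : ∫⁻ x, f x ∂μ ≤ μ G + a * μ Gᶜ := by
      rw [← lintegral_add_compl f hG]
      exact add_le_add h1 h2
    have hle : ∫⁻ x, f x ∂μ ≤ ENNReal.ofReal (1 - ε) := by
      rcases le_or_gt 1 (Real.sqrt ε) with h1ε | h1ε
      · have ha0 : a = 0 := by
          rw [ha, ENNReal.ofReal_eq_zero]; linarith
        have hμG0 : μ G = 0 := le_antisymm (hcon.trans_eq ha0) zero_le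
        calc ∫⁻ x, f x ∂μ ≤ μ G + a * μ Gᶜ := hsplit
          _ = 0 := by rw [hμG0, ha0, zero_mul, add_zero]
          _ ≤ _ := zero_le
      · have hε1 : ε < 1 := by nlinarith
        have hale : a ≤ 1 := by
          rw [ha]
          calc ENNReal.ofReal (1 - Real.sqrt ε) ≤ ENNReal.ofReal 1 :=
                ENNReal.ofReal_le_ofReal (by linarith)
            _ = 1 := ENNReal.ofReal_one
        have hμGne : μ G ≠ ⊤ := (measure_ne_top μ G)
        set g : ℝ := (μ G).toReal with hg
        have hg0 : 0 ≤ g := ENNReal.toReal_nonneg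
        have hgle : g ≤ 1 - Real.sqrt ε := by
          have := ENNReal.toReal_mono (by rw [ha]; exact ENNReal.ofReal_ne_top) hcon
          rwa [ha, ENNReal.toReal_ofReal (by linarith)] at this
        have hμGeq : μ G = ENNReal.ofReal g := (ENNReal.ofReal_toReal hμGne).symm
        have hcompl : μ Gᶜ = ENNReal.ofReal (1 - g) := by
          rw [prob_compl_eq_one_sub hG, hμGeq, ← ENNReal.ofReal_one,
            ← ENNReal.ofReal_sub 1 hg0]
        calc ∫⁻ x, f x ∂μ ≤ μ G + a * μ Gᶜ := hsplit
          _ = ENNReal.ofReal (g + (1 - Real.sqrt ε) * (1 - g)) := by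
              rw [hμGeq, hcompl, ha, ← ENNReal.ofReal_mul (by linarith),
                ← ENNReal.ofReal_add hg0 (by nlinarith)]
          _ ≤ ENNReal.ofReal (1 - ε) := ENNReal.ofReal_le_ofReal (by nlinarith)
    rw [hprod] at hF
    exact absurd hF (not_lt.2 hle)
  -- fibers are covered by projected filters
  have fiber_sub : ∀ x : X, Prod.mk x ⁻¹' U ⊆
      {y | ∃ b ∈ (F.filter fun q => dist q.1 x < δ / 2).image Prod.snd, dist b y < δ} := by
    intro x y hy
    obtain ⟨q, hqF, hq⟩ := hy
    simp only at hq
    have h1 := dist_nonneg (x := q.1) (y := x)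
    have h2 := dist_nonneg (x := q.2) (y := y)
    refine ⟨q.2, Finset.mem_image_of_mem _ (Finset.mem_filter.2 ⟨hqF, by linarith⟩), by linarith⟩
  have covY_le : ∀ x ∈ G, covNumMeas dist ν (Real.sqrt ε) δ ≤
      ((F.filter fun q => dist q.1 x < δ / 2).card : ℕ∞) := by
    intro x hx
    have hν : ENNReal.ofReal (1 - Real.sqrt ε) <
        ν {z | ∃ b ∈ (F.filter fun q => dist q.1 x < δ / 2).image Prod.snd, dist b z < δ} :=
      lt_of_lt_of_le hx (measure_mono (fiber_sub x))
    calc covNumMeas dist ν (Real.sqrt ε) δ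
        ≤ (((F.filter fun q => dist q.1 x < δ / 2).image Prod.snd).card : ℕ∞) :=
          iInf_le (fun F' : {F' : Finset Y //
            ENNReal.ofReal (1 - Real.sqrt ε) < ν {z | ∃ x ∈ F', dist x z < δ}} =>
            (F'.1.card : ℕ∞)) ⟨_, hν⟩
      _ ≤ _ := by exact_mod_cast Finset.card_image_le
  have nt_ne : ∀ x ∈ G, (F.filter fun q => dist q.1 x < δ / 2).Nonempty := by
    intro x hx
    have hpos : (0 : ENNReal) < f x := lt_of_le_of_lt (zero_le (a := a)) hx
    obtain ⟨y, q, hqF, hq⟩ := nonempty_of_measure_ne_zero hpos.ne'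
    simp only at hq
    have h2 := dist_nonneg (x := q.2) (y := y)
    exact ⟨q, Finset.mem_filter.2 ⟨hqF, by linarith⟩⟩
  -- separated families
  set sep : Finset X → Prop := fun T =>
    (∀ t ∈ T, t ∈ G) ∧ ∀ t₁ ∈ T, ∀ t₂ ∈ T, t₁ ≠ t₂ → δ ≤ dist t₁ t₂ with hsepdef
  have disj : ∀ T, sep T → ∀ t₁ ∈ T, ∀ t₂ ∈ T, t₁ ≠ t₂ →
      Disjoint (F.filter fun q => dist q.1 t₁ < δ / 2)
        (F.filter fun q => dist q.1 t₂ < δ / 2) := by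
    intro T hT t₁ h₁ t₂ h₂ hne
    refine Finset.disjoint_left.2 fun q hq1 hq2 => ?_
    have d1 := (Finset.mem_filter.1 hq1).2
    have d2 := (Finset.mem_filter.1 hq2).2
    have hsep := hT.2 t₁ h₁ t₂ h₂ hne
    have htri := dist_triangle t₁ q.1 t₂
    have hcomm : dist t₁ q.1 = dist q.1 t₁ := dist_comm _ _
    linarith
  have card_le : ∀ T, sep T → T.card ≤ F.card := by
    intro T hT
    calc T.card = ∑ _t ∈ T, 1 := by simp
      _ ≤ ∑ t ∈ T, (F.filter fun q => dist q.1 t < δ / 2).card :=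
          Finset.sum_le_sum fun t ht => Finset.card_pos.2 (nt_ne t (hT.1 t ht))
      _ = (T.biUnion fun t => F.filter fun q => dist q.1 t < δ / 2).card :=
          (Finset.card_biUnion (disj T hT)).symm
      _ ≤ F.card := Finset.card_le_card
          (Finset.biUnion_subset.2 fun t _ => Finset.filter_subset _ _)
  -- maximal separated family
  set A : Set ℕ := {k | ∃ T, sep T ∧ T.card = k} with hAdef
  have hA0 : 0 ∈ A := ⟨∅, ⟨by simp, by simp⟩, rfl⟩
  have hAbdd : BddAbove A := ⟨F.card, by rintro k ⟨T, hT, rfl⟩; exact card_le T hT⟩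
  obtain ⟨T, hTsep, hTcard⟩ := Nat.sSup_mem ⟨0, hA0⟩ hAbdd
  have hmax : ∀ x ∈ G, ∃ t ∈ T, dist t x < δ := by
    intro x hx
    by_contra hcon
    push_neg at hcon
    have hxT : x ∉ T := by
      intro hxT
      have := hcon x hxT
      rw [dist_self] at this
      linarith
    have hsep' : sep (insert x T) := by
      constructor
      · intro t ht
        rcases Finset.mem_insert.1 ht with rfl | ht
        · exact hx
        · exact hTsep.1 t ht
      · intro t₁ h₁ t₂ h₂ hne
        rcases Finset.mem_insert.1 h₁ with h₁x | h₁T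
        · rcases Finset.mem_insert.1 h₂ with h₂x | h₂T
          · exact absurd (h₁x.trans h₂x.symm) hne
          · rw [h₁x, dist_comm]; exact hcon t₂ h₂T
        · rcases Finset.mem_insert.1 h₂ with h₂x | h₂T
          · rw [h₂x]; exact hcon t₁ h₁T
          · exact hTsep.2 t₁ h₁T t₂ h₂T hne
    have hmem : (insert x T).card ∈ A := ⟨_, hsep', rfl⟩
    have hle := le_csSup hAbdd hmem
    rw [Finset.card_insert_of_notMem hxT] at hle
    omega
  have hGne : G.Nonempty := nonempty_of_measure_ne_zero (lt_of_le_of_lt (zero_le (a := a)) hμG).ne'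
  have hTne : T.Nonempty := by
    obtain ⟨x, hx⟩ := hGne
    obtain ⟨t, ht, -⟩ := hmax x hx
    exact ⟨t, ht⟩
  have covX_le : covNumMeas dist μ (Real.sqrt ε) δ ≤ (T.card : ℕ∞) := by
    have hμT : ENNReal.ofReal (1 - Real.sqrt ε) < μ {z | ∃ t ∈ T, dist t z < δ} :=
      lt_of_lt_of_le hμG (measure_mono fun x hx => hmax x hx)
    exact iInf_le (fun F' : {F' : Finset X //
      ENNReal.ofReal (1 - Real.sqrt ε) < μ {z | ∃ x ∈ F', dist x z < δ}} =>
      (F'.1.card : ℕ∞)) ⟨T, hμT⟩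
  set k : ℕ := T.inf' hTne fun t => (F.filter fun q => dist q.1 t < δ / 2).card with hkdef
  obtain ⟨t₀, ht₀, hk⟩ := Finset.exists_mem_eq_inf' hTne
    fun t => (F.filter fun q => dist q.1 t < δ / 2).card
  have covY_le_k : covNumMeas dist ν (Real.sqrt ε) δ ≤ (k : ℕ∞) := by
    rw [hkdef, hk]
    exact covY_le t₀ (hTsep.1 t₀ ht₀)
  have hcount : T.card * k ≤ F.card := by
    calc T.card * k = ∑ _t ∈ T, k := by rw [Finset.sum_const, smul_eq_mul, mul_comm]
      _ ≤ ∑ t ∈ T, (F.filter fun q => dist q.1 t < δ / 2).card :=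
          Finset.sum_le_sum fun t ht => Finset.inf'_le _ ht
      _ = (T.biUnion fun t => F.filter fun q => dist q.1 t < δ / 2).card :=
          (Finset.card_biUnion (disj T hTsep)).symm
      _ ≤ F.card := Finset.card_le_card
          (Finset.biUnion_subset.2 fun t _ => Finset.filter_subset _ _)
  calc covNumMeas dist μ (Real.sqrt ε) δ * covNumMeas dist ν (Real.sqrt ε) δ
      ≤ (T.card : ℕ∞) * (k : ℕ∞) := mul_le_mul' covX_le covY_le_k
    _ = ((T.card * k : ℕ) : ℕ∞) := by exact_mod_cast rfl
    _ ≤ (F.card : ℕ∞) := by exact_mod_cast hcount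
end

section
/- Let (X,μ) be a probability space, H a real Hilbert space, a : X → H strongly (Bochner) measurable and bounded, and b ∈ H with ‖b‖ ≤ 1. Then ∫ |⟨a(x),b⟩| dμ(x) ≤ sqrt( ∬ |⟨a(x),a(x')⟩| dμ(x) dμ(x') ). -/
open MeasureTheory

/-- **A Cauchy–Bunyakowski–Schwartz consequence.**
For a bounded strongly measurable `a : X → H` into a real Hilbert space and
`b ∈ H` with `‖b‖ ≤ 1`,
`∫ |⟨a(x),b⟩| dμ(x) ≤ sqrt(∬ |⟨a(x),a(x')⟩| dμ(x) dμ(x'))`. -/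
theorem integral_abs_inner_le_sqrt {X H : Type*} [MeasurableSpace X]
    [NormedAddCommGroup H] [InnerProductSpace ℝ H]
    (μ : Measure X) [IsProbabilityMeasure μ]
    (a : X → H) (ha : StronglyMeasurable a) (C : ℝ) (hC : ∀ x, ‖a x‖ ≤ C)
    (b : H) (hb : ‖b‖ ≤ 1) :
    (∫ x, |(inner ℝ (a x) b : ℝ)| ∂μ) ≤
      Real.sqrt (∫ x, ∫ x', |(inner ℝ (a x) (a x') : ℝ)| ∂μ ∂μ) := by
  classical
  set E := UniformSpace.Completion H with hE
  have hcoe : Isometry ((↑·) : H → E) := UniformSpace.Completion.coe_isometry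
  set A : X → E := fun x => (a x : E) with hA
  set B : E := (b : E) with hB
  have hAm : StronglyMeasurable A := hcoe.continuous.comp_stronglyMeasurable ha
  have hAnorm : ∀ x, ‖A x‖ = ‖a x‖ := fun x => UniformSpace.Completion.norm_coe _
  have hinner : ∀ x x', (inner ℝ (A x) (A x') : ℝ) = (inner ℝ (a x) (a x') : ℝ) :=
    fun x x' => UniformSpace.Completion.inner_coe _ _
  have hinnerB : ∀ x, (inner ℝ (A x) B : ℝ) = (inner ℝ (a x) b : ℝ) :=
    fun x => UniformSpace.Completion.inner_coe _ _
  set C' : ℝ := |C| with hC'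
  have hC'' : ∀ x, ‖A x‖ ≤ C' := fun x => (hAnorm x ▸ (hC x).trans (le_abs_self C))
  -- the sign function
  set s : X → ℝ := fun x => if 0 ≤ (inner ℝ (A x) B : ℝ) then 1 else -1 with hs
  have hs_abs : ∀ x, |s x| = 1 := by
    intro x; by_cases h : 0 ≤ (inner ℝ (A x) B : ℝ) <;> simp [hs, h]
  have hs_mul : ∀ x, s x * (inner ℝ (A x) B : ℝ) = |(inner ℝ (A x) B : ℝ)| := by
    intro x
    by_cases h : 0 ≤ (inner ℝ (A x) B : ℝ)
    · simp [hs, h, abs_of_nonneg h]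
    · simp [hs, h, abs_of_neg (lt_of_not_ge h)]
  have hsm : StronglyMeasurable s := by
    refine StronglyMeasurable.ite ?_ stronglyMeasurable_const stronglyMeasurable_const
    exact measurableSet_le measurable_const
      (hAm.inner stronglyMeasurable_const).measurable
  set g : X → E := fun x => s x • A x with hg
  have hgm : StronglyMeasurable g := hsm.smul hAm
  have hgnorm : ∀ x, ‖g x‖ = ‖A x‖ := by
    intro x; rw [hg]; simp only [norm_smul, Real.norm_eq_abs, hs_abs, one_mul]
  have hgint : Integrable g μ :=
    Integrable.mono' (integrable_const C') hgm.aestronglyMeasurable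
      (ae_of_all _ fun x => (hgnorm x) ▸ hC'' x)
  set v : E := ∫ x, g x ∂μ with hv
  -- Step 1 : ∫ |⟨a x, b⟩| = ⟨v, B⟩ ≤ ‖v‖
  have step1 : (∫ x, |(inner ℝ (a x) b : ℝ)| ∂μ) = (inner ℝ v B : ℝ) := by
    have hpt : ∀ x, |(inner ℝ (a x) b : ℝ)| = (inner ℝ B (g x) : ℝ) := by
      intro x
      have : (inner ℝ B (g x) : ℝ) = s x * (inner ℝ (A x) B : ℝ) := by
        rw [hg]
        simp only [real_inner_smul_right]
        rw [real_inner_comm]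
      rw [this, hs_mul x, hinnerB x]
    simp_rw [hpt]
    rw [integral_inner hgint B, real_inner_comm]
  rw [step1]
  have hBnorm : ‖B‖ ≤ 1 := by
    rw [hB, UniformSpace.Completion.norm_coe]; exact hb
  have step2 : (inner ℝ v B : ℝ) ≤ ‖v‖ :=
    (real_inner_le_norm v B).trans
      (by simpa using mul_le_mul_of_nonneg_left hBnorm (norm_nonneg v))
  refine step2.trans ?_
  -- integrability of abs-inner ℝ kernels
  have habs_int : ∀ c : E, Integrable (fun x' => |(inner ℝ c (g x') : ℝ)|) μ := by
    intro c
    have hm : StronglyMeasurable fun x' => |(inner ℝ c (g x') : ℝ)| := by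
      have h0 : StronglyMeasurable fun x' => (inner ℝ c (g x') : ℝ) :=
        StronglyMeasurable.inner stronglyMeasurable_const hgm
      exact continuous_abs.comp_stronglyMeasurable h0
    refine Integrable.mono' (integrable_const (‖c‖ * C')) hm.aestronglyMeasurable
      (ae_of_all _ fun x => ?_)
    rw [Real.norm_eq_abs, abs_abs]
    exact (abs_real_inner_le_norm c (g x)).trans
      (mul_le_mul_of_nonneg_left ((hgnorm x).le.trans (hC'' x)) (norm_nonneg c))
  have habs_int_a : ∀ x, Integrable (fun x' => |(inner ℝ (a x) (a x') : ℝ)|) μ := by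
    intro x
    have hm : StronglyMeasurable fun x' => |(inner ℝ (a x) (a x') : ℝ)| := by
      have h0 : StronglyMeasurable fun x' => (inner ℝ (a x) (a x') : ℝ) :=
        StronglyMeasurable.inner stronglyMeasurable_const ha
      exact continuous_abs.comp_stronglyMeasurable h0
    refine Integrable.mono' (integrable_const (C' * C')) hm.aestronglyMeasurable
      (ae_of_all _ fun x' => ?_)
    rw [Real.norm_eq_abs, abs_abs]
    exact (abs_real_inner_le_norm (a x) (a x')).trans
      (mul_le_mul ((hC x).trans (le_abs_self C)) ((hC x').trans (le_abs_self C))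
        (norm_nonneg _) (abs_nonneg _))
  have hD_nonneg : 0 ≤ ∫ x, ∫ x', |(inner ℝ (a x) (a x') : ℝ)| ∂μ ∂μ :=
    integral_nonneg fun x => integral_nonneg fun x' => abs_nonneg _
  rw [Real.le_sqrt (norm_nonneg v) hD_nonneg]
  have hvsq : ‖v‖ ^ 2 = ∫ x, (inner ℝ v (g x) : ℝ) ∂μ := by
    rw [← real_inner_self_eq_norm_sq, hv, integral_inner hgint]
  rw [hvsq]
  -- pointwise bound
  have h2 : ∀ x x', |(inner ℝ (g x) (g x') : ℝ)| = |(inner ℝ (a x) (a x') : ℝ)| := by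
    intro x x'
    rw [hg]
    simp only [real_inner_smul_left, real_inner_smul_right, abs_mul, hs_abs, one_mul]
    rw [hinner]
  have hpt : ∀ x, (inner ℝ v (g x) : ℝ) ≤ ∫ x', |(inner ℝ (a x) (a x') : ℝ)| ∂μ := by
    intro x
    have h1 : (inner ℝ v (g x) : ℝ) = ∫ x', (inner ℝ (g x) (g x') : ℝ) ∂μ := by
      rw [real_inner_comm, hv, ← integral_inner hgint (g x)]
    calc (inner ℝ v (g x) : ℝ) = ∫ x', (inner ℝ (g x) (g x') : ℝ) ∂μ := h1
      _ ≤ ∫ x', |(inner ℝ (g x) (g x') : ℝ)| ∂μ :=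
          integral_mono (hgint.const_inner (g x)) (habs_int (g x)) fun x' => le_abs_self _
      _ = ∫ x', |(inner ℝ (a x) (a x') : ℝ)| ∂μ := by simp_rw [h2]
  -- outer comparison
  have hGsm : StronglyMeasurable fun x => ∫ x', |(inner ℝ (a x) (a x') : ℝ)| ∂μ := by
    apply StronglyMeasurable.integral_prod_right (f := fun x x' => |(inner ℝ (a x) (a x') : ℝ)|)
    have h0 : StronglyMeasurable fun p : X × X => (inner ℝ (a p.1) (a p.2) : ℝ) :=
      StronglyMeasurable.inner (ha.comp_measurable measurable_fst)
        (ha.comp_measurable measurable_snd)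
    exact continuous_abs.comp_stronglyMeasurable h0
  have hGint : Integrable (fun x => ∫ x', |(inner ℝ (a x) (a x') : ℝ)| ∂μ) μ := by
    refine Integrable.mono' (integrable_const (C' * C')) hGsm.aestronglyMeasurable
      (ae_of_all _ fun x => ?_)
    rw [Real.norm_eq_abs, abs_of_nonneg (integral_nonneg fun x' => abs_nonneg _)]
    calc ∫ x', |(inner ℝ (a x) (a x') : ℝ)| ∂μ
        ≤ ∫ _x', C' * C' ∂μ := by
          refine integral_mono (habs_int_a x) (integrable_const _) fun x' => ?_
          exact (abs_real_inner_le_norm (a x) (a x')).trans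
            (mul_le_mul ((hC x).trans (le_abs_self C)) ((hC x').trans (le_abs_self C))
              (norm_nonneg _) (abs_nonneg _))
      _ = C' * C' := by simp
  exact integral_mono (hgint.const_inner v) hGint hpt
end

section
/- Let (X,d_X) and (Y,d_Y) be compact metric spaces, μ a Borel probability measure on X, and φ : X → Y a Borel map. Then for every η > 0 there exists a Borel map ψ : X → Y such that: (i) ∫ d_Y(φ(x),ψ(x)) dμ(x) < η, and (ii) there is an open set U ⊆ X with μ(U) > 1−η such that the restriction ψ|U is η-almost L-Lipschitz for some L < ∞. -/
open MeasureTheory Metric Set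

/-- **Existence of almost Lipschitz approximations (Lusin-type theorem).**
For compact metric spaces `X`, `Y`, a Borel probability measure `μ` on `X`, a
Borel map `φ : X → Y` and `η > 0`, there is a Borel map `ψ : X → Y` with
`∫ d_Y(φ x, ψ x) dμ < η` and an open `U` with `μ(U) > 1 - η` on which `ψ` is
η-almost L-Lipschitz for some finite `L`. -/
theorem exists_almost_lipschitz_approximation {X Y : Type*}
    [MetricSpace X] [CompactSpace X] [MetricSpace Y] [CompactSpace Y]
    [MeasurableSpace X] [BorelSpace X] [MeasurableSpace Y] [BorelSpace Y]
    (μ : Measure X) [IsProbabilityMeasure μ]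
    (φ : X → Y) (hφ : Measurable φ) (η : ℝ) (hη : 0 < η) :
    ∃ ψ : X → Y, Measurable ψ ∧
      (∫ x, dist (φ x) (ψ x) ∂μ) < η ∧
      ∃ U : Set X, IsOpen U ∧ ENNReal.ofReal (1 - η) < μ U ∧
        ∃ L : ℝ, ∀ x ∈ U, ∀ x' ∈ U, dist (ψ x) (ψ x') ≤ η + L * dist x x' := by
  classical
  -- X and Y are nonempty
  have hXne : Nonempty X := by
    by_contra h
    rw [not_nonempty_iff] at h
    have h1 : μ Set.univ = 1 := measure_univ
    rw [Set.univ_eq_empty_iff.2 h, measure_empty] at h1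
    exact zero_ne_one h1
  have hYne : Nonempty Y := ⟨φ (Classical.arbitrary X)⟩
  -- diameter of Y
  set D : ℝ := Metric.diam (Set.univ : Set Y) with hD
  have hD0 : 0 ≤ D := Metric.diam_nonneg
  -- the small constant
  set β : ℝ := min (η / (2 * (D + 1))) (1 / 2) with hβ
  have hβ0 : 0 < β := lt_min (by positivity) (by norm_num)
  have hβη : β < η := by
    have : η / (2 * (D + 1)) < η := by
      rw [div_lt_iff₀ (by positivity)]
      nlinarith
    exact lt_of_le_of_lt (min_le_left _ _) this
  have hβhalf : β ≤ 1 / 2 := min_le_right _ _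
  have hDβ : D * β ≤ η / 2 := by
    have h1 : β ≤ η / (2 * (D + 1)) := min_le_left _ _
    have h2 : D * β ≤ D * (η / (2 * (D + 1))) := by
      apply mul_le_mul_of_nonneg_left h1 hD0
    have h3 : D * (η / (2 * (D + 1))) ≤ η / 2 := by
      rw [show D * (η / (2 * (D + 1))) = D * η / (2 * (D + 1)) by ring,
        div_le_div_iff₀ (by positivity) (by norm_num : (0:ℝ) < 2)]
      nlinarith
    linarith
  -- finite cover of Y by balls of radius η/4
  obtain ⟨t, -, htfin, htcov⟩ := (isCompact_univ : IsCompact (Set.univ : Set Y)).finite_cover_balls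
      (e := η / 4) (by positivity)
  set l : List Y := htfin.toFinset.toList with hl
  set n : ℕ := l.length with hn
  set y : ℕ → Y := fun k => l.getD k (Classical.arbitrary Y) with hy
  have hcov : ∀ z : Y, ∃ k, k < n ∧ dist z (y k) < η / 4 := by
    intro z
    obtain ⟨y₀, hy₀t, hz⟩ := Set.mem_iUnion₂.1 (htcov (Set.mem_univ z))
    have : y₀ ∈ l := by
      rw [hl, Finset.mem_toList, Set.Finite.mem_toFinset]
      exact hy₀t
    obtain ⟨i, hi, hli⟩ := List.mem_iff_getElem.1 this
    refine ⟨i, hi, ?_⟩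
    rw [hy]
    simp only
    rw [List.getD_eq_getElem l _ hi, hli]
    exact mem_ball.1 hz
  have hnpos : 0 < n := by
    obtain ⟨k, hk, -⟩ := hcov (Classical.arbitrary Y)
    omega
  -- the partition pieces
  set B : ℕ → Set X := fun k => if k < n then φ ⁻¹' (Metric.ball (y k) (η / 4)) else ∅
    with hB
  have hBmeas : ∀ k, MeasurableSet (B k) := by
    intro k
    rw [hB]
    by_cases h : k < n
    · simp only [if_pos h]
      exact hφ Metric.isOpen_ball.measurableSet
    · simp only [if_neg h]
      exact MeasurableSet.empty
  set C : ℕ → Set X := disjointed B with hC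
  have hCmeas : ∀ k, MeasurableSet (C k) := MeasurableSet.disjointed hBmeas
  have hCdisj : Pairwise (Function.onFun Disjoint C) := disjoint_disjointed B
  have hCsub : ∀ k, C k ⊆ B k := disjointed_subset B
  have hCcover : (⋃ k, C k) = Set.univ := by
    rw [hC, iUnion_disjointed]
    apply Set.eq_univ_of_forall
    intro x
    obtain ⟨k, hk, hdist⟩ := hcov (φ x)
    exact Set.mem_iUnion.2 ⟨k, by rw [hB]; simp only [if_pos hk]; exact mem_ball.2 hdist⟩
  have hCempty : ∀ k, n ≤ k → C k = ∅ := by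
    intro k hk
    apply Set.subset_eq_empty (hCsub k)
    rw [hB]; simp only [if_neg (not_lt.2 hk)]
  -- compact subsets by inner regularity
  have hKex : ∀ k, ∃ F, F ⊆ C k ∧ IsClosed F ∧
      μ (C k \ F) < ENNReal.ofReal (β / (n + 1)) := by
    intro k
    exact (hCmeas k).exists_isClosed_diff_lt (measure_ne_top μ _)
      (ENNReal.ofReal_pos.2 (by positivity)).ne'
  set K : ℕ → Set X := fun k => (hKex k).choose with hK
  have hKsub : ∀ k, K k ⊆ C k := fun k => (hKex k).choose_spec.1
  have hKclosed : ∀ k, IsClosed (K k) := fun k => (hKex k).choose_spec.2.1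
  have hKcompact : ∀ k, IsCompact (K k) := fun k => (hKclosed k).isCompact
  have hKμ : ∀ k, μ (C k \ K k) < ENNReal.ofReal (β / (n + 1)) :=
    fun k => (hKex k).choose_spec.2.2
  have hKdisj : ∀ i j, i ≠ j → Disjoint (K i) (K j) := by
    intro i j hij
    exact (hCdisj hij).mono (hKsub i) (hKsub j)
  have hKempty : ∀ k, n ≤ k → K k = ∅ := by
    intro k hk
    apply Set.subset_eq_empty (hKsub k)
    exact hCempty k hk
  -- find a positive radius with disjoint thickenings
  have hpair : ∀ p : ℕ × ℕ, ∃ δ, 0 < δ ∧ (p.1 ≠ p.2 →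
      Disjoint (Metric.thickening δ (K p.1)) (Metric.thickening δ (K p.2))) := by
    rintro ⟨i, j⟩
    by_cases hij : i = j
    · exact ⟨1, one_pos, fun h => absurd hij h⟩
    · obtain ⟨δ, hδ, hd⟩ := (hKdisj i j hij).exists_thickenings (hKcompact i) (hKclosed j)
      exact ⟨δ, hδ, fun _ => hd⟩
  set f : ℕ × ℕ → ℝ := fun p => (hpair p).choose with hf
  have hfpos : ∀ p, 0 < f p := fun p => (hpair p).choose_spec.1
  have hfd : ∀ p : ℕ × ℕ, p.1 ≠ p.2 →
      Disjoint (Metric.thickening (f p) (K p.1)) (Metric.thickening (f p) (K p.2)) :=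
    fun p => (hpair p).choose_spec.2
  set S : Finset (ℕ × ℕ) := Finset.range n ×ˢ Finset.range n with hS
  have hSne : S.Nonempty := ⟨(0, 0), by
    rw [hS, Finset.mem_product]; constructor <;> exact Finset.mem_range.2 hnpos⟩
  set r : ℝ := min 1 (S.inf' hSne f) with hr
  have hrpos : 0 < r := by
    apply lt_min one_pos
    rw [Finset.lt_inf'_iff]
    intro p _
    exact hfpos p
  have hrle : ∀ i j, i < n → j < n → r ≤ f (i, j) := by
    intro i j hi hj
    refine le_trans (min_le_right _ _) (Finset.inf'_le f ?_)
    rw [hS, Finset.mem_product]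
    exact ⟨Finset.mem_range.2 hi, Finset.mem_range.2 hj⟩
  -- the open sets
  set V : ℕ → Set X := fun k => Metric.thickening (r / 2) (K k) with hV
  have hVopen : ∀ k, IsOpen (V k) := fun k => Metric.isOpen_thickening
  have hKV : ∀ k, K k ⊆ V k := fun k => Metric.self_subset_thickening (by positivity) _
  have hVdisj : ∀ i j, i ≠ j → Disjoint (V i) (V j) := by
    intro i j hij
    by_cases hi : i < n
    · by_cases hj : j < n
      · have h1 : V i ⊆ Metric.thickening (f (i, j)) (K i) :=
          Metric.thickening_mono (by linarith [hrle i j hi hj, hrpos]) _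
        have h2 : V j ⊆ Metric.thickening (f (i, j)) (K j) :=
          Metric.thickening_mono (by linarith [hrle i j hi hj, hrpos]) _
        exact ((hfd (i, j) hij).mono h1 h2)
      · have : V j = ∅ := by
          rw [hV]; simp only
          rw [hKempty j (not_lt.1 hj), Metric.thickening_empty]
        rw [this]; exact disjoint_empty _
    · have : V i = ∅ := by
        rw [hV]; simp only
        rw [hKempty i (not_lt.1 hi), Metric.thickening_empty]
      rw [this]; exact empty_disjoint _
  -- x' outside the bigger thickening of K i when in V j, j ≠ i
  have hfar : ∀ i j, i ≠ j → i < n → j < n →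
      ∀ x' ∈ V j, x' ∉ Metric.thickening r (K i) := by
    intro i j hij hi hj x' hx'
    have h1 : Metric.thickening r (K i) ⊆ Metric.thickening (f (i, j)) (K i) :=
      Metric.thickening_mono (hrle i j hi hj) _
    have h2 : V j ⊆ Metric.thickening (f (i, j)) (K j) :=
      Metric.thickening_mono (by linarith [hrle i j hi hj, hrpos]) _
    intro hmem
    exact (hfd (i, j) hij).ne_of_mem (h1 hmem) (h2 hx') rfl
  -- define ψ
  set idx : X → ℕ := fun x => if h : ∃ k, x ∈ V k then Nat.find h else 0 with hidxdef
  set ψ : X → Y := fun x => y (idx x) with hψ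
  have hidx_mem : ∀ {x : X} (h : ∃ k, x ∈ V k), x ∈ V (idx x) := by
    intro x h
    rw [hidxdef]
    simp only [dif_pos h]
    exact Nat.find_spec h
  have hidx_eq : ∀ {k : ℕ} {x : X}, x ∈ V k → idx x = k := by
    intro k x hx
    have h : ∃ k, x ∈ V k := ⟨k, hx⟩
    have h1 : x ∈ V (idx x) := hidx_mem h
    by_contra hne
    exact (hVdisj _ _ hne).ne_of_mem h1 hx rfl
  -- measurability of ψ
  have hidx_meas : Measurable idx := by
    apply measurable_to_countable'
    intro m
    have : idx ⁻¹' {m} = V m ∪ (if m = 0 then (⋃ k, V k)ᶜ else ∅) := by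
      ext x
      simp only [Set.mem_preimage, Set.mem_singleton_iff, Set.mem_union]
      constructor
      · intro hx
        by_cases h : ∃ k, x ∈ V k
        · left; rw [← hx]; exact hidx_mem h
        · right
          have h0 : idx x = 0 := by rw [hidxdef]; simp only [dif_neg h]
          rw [← hx, h0]
          simp only [if_pos rfl, if_true, Set.mem_compl_iff, Set.mem_iUnion]
          exact h
      · rintro (hx | hx)
        · exact hidx_eq hx
        · by_cases hm : m = 0
          · rw [hm]
            rw [if_pos hm] at hx
            have h : ¬ ∃ k, x ∈ V k := by
              simpa [Set.mem_iUnion] using hx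
            rw [hidxdef]; simp only [dif_neg h]
          · rw [if_neg hm] at hx
            exact absurd hx (Set.notMem_empty x)
    rw [this]
    apply ((hVopen m).measurableSet).union
    by_cases hm : m = 0
    · rw [if_pos hm]
      exact (MeasurableSet.iUnion fun k => (hVopen k).measurableSet).compl
    · rw [if_neg hm]
      exact MeasurableSet.empty
  have hψmeas : Measurable ψ := by
    rw [hψ]
    exact Measurable.comp (g := y) measurable_from_top hidx_meas
  -- the good set
  set G : Set X := ⋃ k, K k with hG
  have hGmeas : MeasurableSet G :=
    MeasurableSet.iUnion fun k => (hKclosed k).measurableSet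
  -- measure of the complement of G
  have hGc : μ Gᶜ ≤ ENNReal.ofReal β := by
    have hsub : Gᶜ ⊆ ⋃ k ∈ Finset.range n, (C k \ K k) := by
      intro x hx
      have : x ∈ ⋃ k, C k := by rw [hCcover]; exact Set.mem_univ x
      obtain ⟨k, hk⟩ := Set.mem_iUnion.1 this
      have hkn : k < n := by
        by_contra h
        rw [hCempty k (not_lt.1 h)] at hk
        exact hk
      refine Set.mem_biUnion (Finset.mem_range.2 hkn) ⟨hk, ?_⟩
      intro hxK
      exact hx (Set.mem_iUnion.2 ⟨k, hxK⟩)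
    calc μ Gᶜ ≤ μ (⋃ k ∈ Finset.range n, (C k \ K k)) := measure_mono hsub
      _ ≤ ∑ k ∈ Finset.range n, μ (C k \ K k) := measure_biUnion_finset_le _ _
      _ ≤ ∑ _k ∈ Finset.range n, ENNReal.ofReal (β / (n + 1)) :=
          Finset.sum_le_sum fun k _ => (hKμ k).le
      _ = n * ENNReal.ofReal (β / (n + 1)) := by
          rw [Finset.sum_const, Finset.card_range, nsmul_eq_mul]
      _ = ENNReal.ofReal (n * (β / (n + 1))) := by
          rw [ENNReal.ofReal_mul (by positivity), ENNReal.ofReal_natCast]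
      _ ≤ ENNReal.ofReal β := by
          apply ENNReal.ofReal_le_ofReal
          rw [mul_div_assoc']
          rw [div_le_iff₀ (by positivity)]
          nlinarith [hβ0.le]
  -- ψ is close to φ on G
  have hclose : ∀ x ∈ G, dist (φ x) (ψ x) ≤ η / 4 := by
    intro x hx
    obtain ⟨k, hk⟩ := Set.mem_iUnion.1 hx
    have hkn : k < n := by
      by_contra h
      rw [hKempty k (not_lt.1 h)] at hk
      exact hk
    have hψx : ψ x = y k := by
      rw [hψ]; simp only
      rw [hidx_eq (hKV k hk)]
    have hxB : x ∈ B k := hCsub k (hKsub k hk)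
    rw [hB] at hxB
    simp only [if_pos hkn] at hxB
    rw [hψx]
    exact le_of_lt (mem_ball.1 hxB)
  -- integral bound
  have hint : (∫ x, dist (φ x) (ψ x) ∂μ) < η := by
    have hfg : (fun x => dist (φ x) (ψ x)) ≤
        fun x => η / 4 + Gᶜ.indicator (fun _ => D) x := by
      intro x
      by_cases hx : x ∈ G
      · have h0 : Gᶜ.indicator (fun _ => D) x = 0 :=
          Set.indicator_of_notMem (Set.notMem_compl_iff.2 hx) _
        simp only [h0, add_zero]
        exact hclose x hx
      · have h0 : Gᶜ.indicator (fun _ => D) x = D :=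
          Set.indicator_of_mem (Set.mem_compl hx) _
        simp only [h0]
        have : dist (φ x) (ψ x) ≤ D :=
          Metric.dist_le_diam_of_mem isCompact_univ.isBounded (Set.mem_univ _)
            (Set.mem_univ _)
        linarith [hη]
    have hfmeas : Measurable fun x => dist (φ x) (ψ x) := hφ.dist hψmeas
    have hfint : Integrable (fun x => dist (φ x) (ψ x)) μ := by
      refine (integrable_const D).mono' hfmeas.aestronglyMeasurable ?_
      apply ae_of_all
      intro x
      rw [Real.norm_of_nonneg dist_nonneg]
      exact Metric.dist_le_diam_of_mem isCompact_univ.isBounded (Set.mem_univ _)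
        (Set.mem_univ _)
    have hgint : Integrable (fun x => η / 4 + Gᶜ.indicator (fun _ => D) x) μ := by
      apply Integrable.add (integrable_const _)
      exact (integrable_const D).indicator hGmeas.compl
    have h1 : (∫ x, dist (φ x) (ψ x) ∂μ) ≤
        ∫ x, (η / 4 + Gᶜ.indicator (fun _ => D) x) ∂μ :=
      integral_mono hfint hgint hfg
    have h2 : (∫ x, (η / 4 + Gᶜ.indicator (fun _ => D) x) ∂μ)
        = η / 4 + (μ Gᶜ).toReal * D := by
      rw [integral_add (integrable_const _)
        ((integrable_const D).indicator hGmeas.compl), integral_const,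
        integral_indicator_const _ hGmeas.compl]
      simp [measure_univ, Measure.real]
    have h3 : (μ Gᶜ).toReal ≤ β := ENNReal.toReal_le_of_le_ofReal hβ0.le hGc
    have h4 : (μ Gᶜ).toReal * D ≤ β * D := by
      apply mul_le_mul_of_nonneg_right h3 hD0
    calc (∫ x, dist (φ x) (ψ x) ∂μ) ≤ η / 4 + (μ Gᶜ).toReal * D := by rw [← h2]; exact h1
      _ ≤ η / 4 + β * D := by linarith
      _ ≤ η / 4 + η / 2 := by
          have hcomm : β * D = D * β := mul_comm _ _
          linarith [hDβ]
      _ < η := by linarith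
  -- the open set U
  set U : Set X := ⋃ k, V k with hU
  have hUopen : IsOpen U := isOpen_iUnion hVopen
  have hGU : G ⊆ U := Set.iUnion_mono hKV
  have hUμ : ENNReal.ofReal (1 - η) < μ U := by
    have h1 : μ G + μ Gᶜ = 1 := by
      rw [measure_add_measure_compl hGmeas, measure_univ]
    have h2 : (1 : ENNReal) - μ Gᶜ ≤ μ G := by
      rw [← h1]
      exact tsub_le_iff_right.2 le_rfl
    have h3 : ENNReal.ofReal (1 - η) + ENNReal.ofReal β < 1 := by
      by_cases hcase : 1 - η ≤ 0
      · rw [ENNReal.ofReal_eq_zero.2 hcase, zero_add]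
        calc ENNReal.ofReal β ≤ ENNReal.ofReal (1 / 2) :=
              ENNReal.ofReal_le_ofReal hβhalf
          _ < 1 := by
              rw [show (1 : ENNReal) = ENNReal.ofReal 1 by simp]
              exact (ENNReal.ofReal_lt_ofReal_iff one_pos).2 (by norm_num)
      · push_neg at hcase
        rw [← ENNReal.ofReal_add (by linarith) hβ0.le,
          show (1 : ENNReal) = ENNReal.ofReal 1 by simp]
        exact (ENNReal.ofReal_lt_ofReal_iff one_pos).2 (by linarith)
    have h4 : ENNReal.ofReal (1 - η) < 1 - ENNReal.ofReal β :=
      lt_tsub_iff_right.2 h3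
    have h5 : (1 : ENNReal) - ENNReal.ofReal β ≤ 1 - μ Gᶜ := tsub_le_tsub_left hGc 1
    exact lt_of_lt_of_le h4 (le_trans h5 (le_trans h2 (measure_mono hGU)))
  -- almost Lipschitz constant
  refine ⟨ψ, hψmeas, hint, U, hUopen, hUμ, 2 * D / r, ?_⟩
  intro x hx x' hx'
  obtain ⟨i, hxi⟩ := Set.mem_iUnion.1 hx
  obtain ⟨j, hx'j⟩ := Set.mem_iUnion.1 hx'
  have hix : idx x = i := hidx_eq hxi
  have hjx : idx x' = j := hidx_eq hx'j
  by_cases hij : i = j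
  · have : ψ x = ψ x' := by
      rw [hψ]; simp only
      rw [hix, hjx, hij]
    rw [this, dist_self]
    have : 0 ≤ 2 * D / r * dist x x' := by positivity
    linarith
  · -- i ≠ j; both K i nonempty (x ∈ V i means thickening nonempty)
    have hin : i < n := by
      by_contra h
      rw [hV] at hxi
      simp only at hxi
      rw [hKempty i (not_lt.1 h), Metric.thickening_empty] at hxi
      exact hxi
    have hjn : j < n := by
      by_contra h
      rw [hV] at hx'j
      simp only at hx'j
      rw [hKempty j (not_lt.1 h), Metric.thickening_empty] at hx'j
      exact hx'j
    -- x is within r/2 of some p ∈ K i, x' is at distance ≥ r of every point of K i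
    obtain ⟨p, hpK, hxp⟩ := Metric.mem_thickening_iff.1 hxi
    have hx'far : x' ∉ Metric.thickening r (K i) := hfar i j hij hin hjn x' hx'j
    have hx'p : r ≤ dist x' p := by
      by_contra h
      push_neg at h
      exact hx'far (Metric.mem_thickening_iff.2 ⟨p, hpK, h⟩)
    have hdxx' : r / 2 ≤ dist x x' := by
      have := dist_triangle x' x p
      have h2 := dist_comm x p
      linarith [hxp, hx'p, dist_comm x' x]
    have hψd : dist (ψ x) (ψ x') ≤ D :=
      Metric.dist_le_diam_of_mem isCompact_univ.isBounded (Set.mem_univ _)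
        (Set.mem_univ _)
    have : D ≤ 2 * D / r * dist x x' := by
      have h1 : 2 * D / r * (r / 2) = D := by
        field_simp
      calc D = 2 * D / r * (r / 2) := h1.symm
        _ ≤ 2 * D / r * dist x x' := by
            apply mul_le_mul_of_nonneg_left hdxx'
            positivity
    linarith
end

section
/- Let G be a countable group, Σ = (σ_n : G → Sym(V_n)) a sofic approximation, (𝒳,d) a compact metric space, and for x ∈ 𝒳^{V_n} let P^{σ_n}_x := (1/|V_n|) Σ_{v∈V_n} δ_{Π^{σ_n}_v(x)} be the empirical distribution on 𝒳^G. Then for every finite F ⊆ G and every g ∈ G: sup_{x ∈ 𝒳^{V_n}} ‖(P^{σ_n}_x)_F − (S^g_* P^{σ_n}_x)_F‖_{TV} → 0 as n → ∞, where (·)_F denotes the marginal on 𝒳^F and S is the right-shift action. -/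
open MeasureTheory Filter Topology
open scoped ENNReal

/-- The right-shift action: `(S^g y) h = y (h * g)`. -/
def shiftMap (G : Type*) [Group G] (𝒳 : Type*) (g : G) : (G → 𝒳) → (G → 𝒳) :=
  fun y h => y (h * g)

/-- The pullback name of `x : 𝒳^V` at `v` over `σ`: `(x_{σ^g(v)})_{g ∈ G}`. -/
def pullbackName {G W 𝒳 : Type*} (σ : G → Equiv.Perm W) (v : W) (x : W → 𝒳) : G → 𝒳 :=
  fun g => x (σ g v)

/-- The empirical distribution `P^σ_x = (1/|V|) Σ_v δ_{Π^σ_v(x)}` on `𝒳^G`. -/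
noncomputable def empMeasure {G W 𝒳 : Type*} [Fintype W] [MeasurableSpace 𝒳]
    (σ : G → Equiv.Perm W) (x : W → 𝒳) : Measure (G → 𝒳) :=
  (Fintype.card W : ℝ≥0∞)⁻¹ • ∑ v : W, Measure.dirac (pullbackName σ v x)

/-- The marginal of a measure on `𝒳^G` on the coordinates in a finite `F ⊆ G`. -/
noncomputable def marginalF {G 𝒳 : Type*} [MeasurableSpace 𝒳] (F : Finset G)
    (μ : Measure (G → 𝒳)) : Measure (↥F → 𝒳) :=
  μ.map fun y (h : ↥F) => y ↑h

/-- The total variation distance between two measures: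
`sup_A |μ(A) − ν(A)|` over measurable sets `A`. -/
noncomputable def tvDist {Z : Type*} [MeasurableSpace Z] (μ ν : Measure Z) : ℝ :=
  ⨆ A : {A : Set Z // MeasurableSet A}, |(μ A.1).toReal - (ν A.1).toReal|

lemma measurable_projF {G 𝒳 : Type*} [MeasurableSpace 𝒳] (F : Finset G) :
    Measurable (fun (y : G → 𝒳) (h : ↥F) => y ↑h) :=
  measurable_pi_lambda _ fun h => measurable_pi_apply _

lemma measurable_shiftMap {G : Type*} [Group G] (𝒳 : Type*) [MeasurableSpace 𝒳] (g : G) :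
    Measurable (shiftMap G 𝒳 g) :=
  measurable_pi_lambda _ fun h => measurable_pi_apply _

lemma natCard_subtype_eq_filter {W : Type*} [Fintype W] (P : W → Prop) [DecidablePred P] :
    Nat.card {v : W // P v} = (Finset.univ.filter P).card := by
  rw [Nat.card_eq_fintype_card, Fintype.card_subtype]

lemma empMeasure_apply_toReal {G W 𝒳 : Type*} [Fintype W] [MeasurableSpace 𝒳]
    (σ : G → Equiv.Perm W) (x : W → 𝒳) {S : Set (G → 𝒳)} (hS : MeasurableSet S) :
    ((empMeasure σ x) S).toReal
      = (Nat.card {v : W // pullbackName σ v x ∈ S} : ℝ) / (Fintype.card W : ℝ) := by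
  classical
  rw [empMeasure, Measure.smul_apply, Measure.finset_sum_apply]
  simp only [Measure.dirac_apply' _ hS, Set.indicator_apply, Pi.one_apply]
  rw [Finset.sum_boole, smul_eq_mul, ENNReal.toReal_mul, ENNReal.toReal_inv]
  rw [natCard_subtype_eq_filter]
  simp [div_eq_inv_mul]

lemma key_card_bound {W : Type*} [Fintype W] (Q R D : W → Prop) (e : Equiv.Perm W)
    (hQR : ∀ v, ¬ D v → (R v ↔ Q (e v))) :
    |(Nat.card {v : W // Q v} : ℝ) - (Nat.card {v : W // R v} : ℝ)|
      ≤ (Nat.card {v : W // D v} : ℝ) := by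
  classical
  have hQe : Nat.card {v : W // Q v} = Nat.card {v : W // Q (e v)} :=
    Nat.card_congr (Equiv.subtypeEquiv e fun v => Iff.rfl).symm
  rw [hQe, natCard_subtype_eq_filter, natCard_subtype_eq_filter, natCard_subtype_eq_filter]
  set T' := Finset.univ.filter (fun v => Q (e v)) with hT'
  set T := Finset.univ.filter R with hT
  set Df := Finset.univ.filter D with hDf
  have h1 : T.card ≤ T'.card + Df.card := by
    calc T.card ≤ (T' ∪ Df).card := by
          apply Finset.card_le_card
          intro v hv
          simp only [hT, hT', hDf, Finset.mem_filter, Finset.mem_union, Finset.mem_univ,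
            true_and] at *
          by_cases hD : D v
          · exact Or.inr hD
          · exact Or.inl ((hQR v hD).mp hv)
      _ ≤ _ := Finset.card_union_le _ _
  have h2 : T'.card ≤ T.card + Df.card := by
    calc T'.card ≤ (T ∪ Df).card := by
          apply Finset.card_le_card
          intro v hv
          simp only [hT, hT', hDf, Finset.mem_filter, Finset.mem_union, Finset.mem_univ,
            true_and] at *
          by_cases hD : D v
          · exact Or.inr hD
          · exact Or.inl ((hQR v hD).mpr hv)
      _ ≤ _ := Finset.card_union_le _ _
  have h1' : (T.card : ℝ) ≤ T'.card + Df.card := by exact_mod_cast h1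
  have h2' : (T'.card : ℝ) ≤ T.card + Df.card := by exact_mod_cast h2
  rw [abs_sub_le_iff]
  constructor <;> linarith

/-- **Approximate shift-invariance of empirical distributions.**
Over a sofic approximation `Σ`, for every finite `F ⊆ G` and `g ∈ G`,
`sup_{x ∈ 𝒳^{V_n}} ‖(P^{σ_n}_x)_F − (S^g_* P^{σ_n}_x)_F‖_{TV} → 0`. -/
theorem empirical_approx_invariant {G 𝒳 : Type*} [Group G] [Countable G]
    [MetricSpace 𝒳] [CompactSpace 𝒳] [MeasurableSpace 𝒳] [BorelSpace 𝒳]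
    (V : ℕ → Type*) [∀ n, Fintype (V n)] [∀ n, Nonempty (V n)]
    (σ : ∀ n, G → Equiv.Perm (V n))
    (hσ1 : ∀ g h : G,
      Tendsto (fun n => (Nat.card {v : V n // σ n g (σ n h v) = σ n (g * h) v} : ℝ)
          / (Nat.card (V n))) atTop (𝓝 1))
    (hσ2 : ∀ g : G, g ≠ 1 →
      Tendsto (fun n => (Nat.card {v : V n // σ n g v ≠ v} : ℝ)
          / (Nat.card (V n))) atTop (𝓝 1)) :
    ∀ (F : Finset G) (g : G),
      Tendsto (fun n => ⨆ x : V n → 𝒳,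
          tvDist (marginalF F (empMeasure (σ n) x))
            (marginalF F ((empMeasure (σ n) x).map (shiftMap G 𝒳 g))))
        atTop (𝓝 (0 : ℝ)) := by
  classical
  intro F g
  set b : ℕ → ℝ := fun n => ∑ h ∈ F,
      (Nat.card {v : V n // ¬ σ n h (σ n g v) = σ n (h * g) v} : ℝ)
        / (Fintype.card (V n) : ℝ) with hbdef
  have hNpos : ∀ n, (0 : ℝ) < (Fintype.card (V n) : ℝ) := fun n => by
    exact_mod_cast Fintype.card_pos
  have hbnn : ∀ n, 0 ≤ b n := fun n =>
    Finset.sum_nonneg fun h _ => div_nonneg (Nat.cast_nonneg _) (le_of_lt (hNpos n))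
  -- the bound sequence tends to 0
  have hb0 : Tendsto b atTop (𝓝 0) := by
    have : (0 : ℝ) = ∑ h ∈ F, 0 := by simp
    rw [hbdef, this]
    apply tendsto_finset_sum
    intro h _
    have h1 := hσ1 h g
    have key : ∀ n, (Nat.card {v : V n // ¬ σ n h (σ n g v) = σ n (h * g) v} : ℝ)
        / (Fintype.card (V n) : ℝ)
        = 1 - (Nat.card {v : V n // σ n h (σ n g v) = σ n (h * g) v} : ℝ)
          / (Nat.card (V n) : ℝ) := by
      intro n
      have hsum : (Finset.univ.filter (fun v : V n => σ n h (σ n g v) = σ n (h * g) v)).card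
          + (Finset.univ.filter (fun v : V n => ¬ σ n h (σ n g v) = σ n (h * g) v)).card
          = Fintype.card (V n) := by
        rw [Finset.card_filter_add_card_filter_not, Finset.card_univ]
      rw [natCard_subtype_eq_filter, natCard_subtype_eq_filter, Nat.card_eq_fintype_card]
      have hsum' : ((Finset.univ.filter (fun v : V n => σ n h (σ n g v) = σ n (h * g) v)).card
          : ℝ)
          + ((Finset.univ.filter (fun v : V n => ¬ σ n h (σ n g v) = σ n (h * g) v)).card : ℝ)
          = (Fintype.card (V n) : ℝ) := by exact_mod_cast hsum
      field_simp
      linarith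
    have h2 : Tendsto (fun n => 1 - (Nat.card {v : V n // σ n h (σ n g v) = σ n (h * g) v} : ℝ)
        / (Nat.card (V n) : ℝ)) atTop (𝓝 0) := by
      have := h1.const_sub (1 : ℝ)
      simpa using this
    exact h2.congr fun n => (key n).symm
  -- squeeze
  apply tendsto_of_tendsto_of_tendsto_of_le_of_le tendsto_const_nhds hb0
  · intro n
    exact Real.iSup_nonneg fun x => Real.iSup_nonneg fun A => abs_nonneg _
  · intro n
    apply Real.iSup_le _ (hbnn n)
    intro x
    rw [tvDist]
    apply Real.iSup_le _ (hbnn n)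
    rintro ⟨A, hA⟩
    -- compute both measures of A
    have hproj := measurable_projF (𝒳 := 𝒳) F
    have hshift := measurable_shiftMap (G := G) 𝒳 g
    have hμ : ((marginalF F (empMeasure (σ n) x)) A).toReal
        = (Nat.card {v : V n //
            pullbackName (σ n) v x ∈ (fun y (h : ↥F) => y ↑h) ⁻¹' A} : ℝ)
          / (Fintype.card (V n) : ℝ) := by
      rw [marginalF, Measure.map_apply hproj hA, empMeasure_apply_toReal _ _ (hproj hA)]
    have hν : ((marginalF F ((empMeasure (σ n) x).map (shiftMap G 𝒳 g))) A).toReal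
        = (Nat.card {v : V n //
            pullbackName (σ n) v x ∈ shiftMap G 𝒳 g ⁻¹' ((fun y (h : ↥F) => y ↑h) ⁻¹' A)} : ℝ)
          / (Fintype.card (V n) : ℝ) := by
      rw [marginalF, Measure.map_apply hproj hA, Measure.map_apply hshift (hproj hA),
        empMeasure_apply_toReal _ _ (hshift (hproj hA))]
    dsimp only
    rw [hμ, hν, div_sub_div_same, abs_div, abs_of_pos (hNpos n)]
    -- apply the counting lemma
    set Q : V n → Prop := fun v =>
      pullbackName (σ n) v x ∈ (fun y (h : ↥F) => y ↑h) ⁻¹' A with hQdef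
    set R : V n → Prop := fun v =>
      pullbackName (σ n) v x ∈ shiftMap G 𝒳 g ⁻¹' ((fun y (h : ↥F) => y ↑h) ⁻¹' A) with hRdef
    set D : V n → Prop := fun v => ∃ h ∈ F, ¬ σ n h (σ n g v) = σ n (h * g) v with hDdef
    have hQR : ∀ v, ¬ D v → (R v ↔ Q (σ n g v)) := by
      intro v hD
      simp only [hDdef, not_exists, not_and, not_not] at hD
      have heq : (fun h : ↥F => (shiftMap G 𝒳 g (pullbackName (σ n) v x)) ↑h)
          = (fun h : ↥F => (pullbackName (σ n) (σ n g v) x) ↑h) := by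
        funext h
        simp only [shiftMap, pullbackName]
        rw [hD ↑h h.2]
      simp only [hQdef, hRdef, Set.mem_preimage]
      rw [show (fun h : ↥F => (shiftMap G 𝒳 g (pullbackName (σ n) v x)) ↑h)
          = (fun h : ↥F => (pullbackName (σ n) (σ n g v) x) ↑h) from heq]
    have hkey := key_card_bound Q R D (σ n g) hQR
    have hD_le : (Nat.card {v : V n // D v} : ℝ)
        ≤ ∑ h ∈ F, (Nat.card {v : V n // ¬ σ n h (σ n g v) = σ n (h * g) v} : ℝ) := by
      rw [natCard_subtype_eq_filter]
      have hsub : Finset.univ.filter D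
          ⊆ F.biUnion (fun h => Finset.univ.filter
            (fun v : V n => ¬ σ n h (σ n g v) = σ n (h * g) v)) := by
        intro v hv
        simp only [Finset.mem_filter, Finset.mem_univ, true_and, hDdef] at hv
        obtain ⟨h, hhF, hbad⟩ := hv
        exact Finset.mem_biUnion.mpr ⟨h, hhF, Finset.mem_filter.mpr ⟨Finset.mem_univ _, hbad⟩⟩
      calc ((Finset.univ.filter D).card : ℝ)
          ≤ ((F.biUnion (fun h => Finset.univ.filter
              (fun v : V n => ¬ σ n h (σ n g v) = σ n (h * g) v))).card : ℝ) := by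
            exact_mod_cast Finset.card_le_card hsub
        _ ≤ ∑ h ∈ F, ((Finset.univ.filter
              (fun v : V n => ¬ σ n h (σ n g v) = σ n (h * g) v)).card : ℝ) := by
            exact_mod_cast Finset.card_biUnion_le
        _ = _ := by
            refine Finset.sum_congr rfl fun h _ => ?_
            rw [natCard_subtype_eq_filter]
    calc |(Nat.card {v : V n // Q v} : ℝ) - (Nat.card {v : V n // R v} : ℝ)|
          / (Fintype.card (V n) : ℝ)
        ≤ (Nat.card {v : V n // D v} : ℝ) / (Fintype.card (V n) : ℝ) := by
          gcongr
      _ ≤ b n := by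
          simp only [hbdef]
          rw [← Finset.sum_div]
          gcongr
end
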